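/- Let 1 < p < ∞ and γ ∈ ℝ. The maximal operator T_η f(x) = sup_{t>2x} ∫_{t/2}^t z^{η−1} |f(z)| (t−z+x)^{−η} dz is bounded on L^p((0,∞), x^γ dx) in each of the following cases: (a) η > 1 and γ ≥ (η−1)p; (b) η = 1 and γ > 0; (c) 0 < η < 1 and γ ≥ η − 1; (d) η ≤ 0 and γ > −1. -/

import Mathlib

open MeasureTheory Set Filter
open scoped ENNReal NNReal

noncomputable def Tmax (η : ℝ) (f : ℝ → ℝ) (x : ℝ) : ℝ≥0∞ :=
  ⨆ t ∈ Set.Ioi (2 * x),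
    ∫⁻ z in Set.Ioo (t / 2) t, ENNReal.ofReal (z ^ (η - 1) * |f z| * (t - z + x) ^ (-η))

noncomputable def wNorm (p δ : ℝ) (g : ℝ → ℝ≥0∞) : ℝ≥0∞ :=
  (∫⁻ x in Set.Ioi (0 : ℝ), g x ^ p * ENNReal.ofReal (x ^ δ)) ^ (1 / p)

noncomputable def wNormR (p δ : ℝ) (f : ℝ → ℝ) : ℝ≥0∞ :=
  wNorm p δ fun x => ENNReal.ofReal |f x|

lemma lint_Ioo_rpow {c r : ℝ} (hr : -1 < r) (hc : 0 < c) :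
    ∫⁻ x in Ioo (0:ℝ) c, ENNReal.ofReal (x ^ r) = ENNReal.ofReal (c ^ (r+1) / (r+1)) := by
  have hint : IntegrableOn (fun x : ℝ => x ^ r) (Ioo 0 c) volume := by
    have := intervalIntegral.intervalIntegrable_rpow' (a := 0) (b := c) hr
    rw [intervalIntegrable_iff_integrableOn_Ioo_of_le hc.le] at this
    exact this
  rw [← MeasureTheory.ofReal_integral_eq_lintegral_ofReal hint ?nn]
  case nn =>
    filter_upwards [self_mem_ae_restrict (measurableSet_Ioo)] with x hx
    exact Real.rpow_nonneg hx.1.le r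
  congr 1
  have : ∫ x in Ioo (0:ℝ) c, x ^ r = ∫ x in (0:ℝ)..c, x ^ r := by
    rw [intervalIntegral.integral_of_le hc.le, ← integral_Ioc_eq_integral_Ioo]
  rw [this, integral_rpow (Or.inl hr)]
  rw [Real.zero_rpow (by linarith)]
  ring
/-- Lebesgue integral of a power tail. -/


lemma lint_Ioi_rpow {c s : ℝ} (hs : s < -1) (hc : 0 < c) :
    ∫⁻ x in Ioi c, ENNReal.ofReal (x ^ s) = ENNReal.ofReal (c ^ (s+1) / (-s-1)) := by
  rw [← MeasureTheory.ofReal_integral_eq_lintegral_ofReal (integrableOn_Ioi_rpow_of_lt hs hc) ?nn]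
  case nn =>
    filter_upwards [self_mem_ae_restrict (measurableSet_Ioi)] with x hx
    exact Real.rpow_nonneg (le_trans hc.le hx.le) s
  rw [integral_Ioi_rpow_of_lt hs hc]
  congr 1
  rw [neg_div, ← div_neg]
  ring_nf
/-- Reflection in lintegral. -/


lemma lint_refl (c a b : ℝ) (g : ℝ → ℝ≥0∞) (hg : Measurable g) :
    ∫⁻ z in Ioo a b, g (c - z) = ∫⁻ v in Ioo (c - b) (c - a), g v := by
  have mp : MeasurePreserving (fun z : ℝ => c - z) volume volume :=
    Measure.measurePreserving_sub_left volume c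
  have hpre : (fun z : ℝ => c - z) ⁻¹' (Ioo (c - b) (c - a)) = Ioo a b := by
    ext z; simp only [mem_preimage, mem_Ioo]; constructor <;> intro h <;> constructor <;> linarith [h.1, h.2]
  rw [← hpre]
  exact mp.setLIntegral_comp_preimage measurableSet_Ioo hg


lemma swap_power (u : ℝ) (hu : -1 < u) (H : ℝ → ℝ≥0∞) (hH : Measurable H) :
    ∫⁻ x in Ioi (0:ℝ), ENNReal.ofReal (x ^ u) * ∫⁻ z in Ioi x, H z
      = ∫⁻ z in Ioi (0:ℝ), H z * ENNReal.ofReal (z ^ (u+1) / (u+1)) := by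
  set F : ℝ → ℝ → ℝ≥0∞ := fun x z =>
    ({q : ℝ × ℝ | 0 < q.1 ∧ q.1 < q.2}.indicator (fun q => ENNReal.ofReal (q.1 ^ u) * H q.2)) (x, z)
    with hF
  have hS : MeasurableSet {q : ℝ × ℝ | 0 < q.1 ∧ q.1 < q.2} :=
    (measurableSet_lt measurable_const measurable_fst).inter
      (measurableSet_lt measurable_fst measurable_snd)
  have hFm : Measurable (Function.uncurry F) := by
    apply Measurable.indicator _ hS
    exact ((measurable_fst.pow_const u).ennreal_ofReal).mul (hH.comp measurable_snd)
  -- LHS = double integral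
  have hL : ∫⁻ x in Ioi (0:ℝ), ENNReal.ofReal (x ^ u) * ∫⁻ z in Ioi x, H z
      = ∫⁻ x : ℝ, ∫⁻ z : ℝ, F x z := by
    rw [← lintegral_indicator measurableSet_Ioi]
    congr 1
    ext x
    by_cases hx : x ∈ Ioi (0:ℝ)
    · rw [indicator_of_mem hx]
      have : ∀ z : ℝ, F x z = (Ioi x).indicator (fun z => ENNReal.ofReal (x ^ u) * H z) z := by
        intro z
        by_cases hz : x < z
        · simp only [hF, indicator, mem_setOf_eq, mem_Ioi, hz, hx.out, and_self, if_true]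
        · rw [hF]
          simp only [indicator]
          rw [if_neg (by simp [hz]), if_neg (by simpa using hz)]
      simp_rw [this]
      rw [lintegral_indicator measurableSet_Ioi, lintegral_const_mul _ hH]
    · have hx' : x ≤ 0 := by simpa using hx
      rw [indicator_of_notMem hx]
      have : ∀ z : ℝ, F x z = 0 := by
        intro z; rw [hF]; apply indicator_of_notMem
        simp only [mem_setOf_eq, not_and_or]
        left; linarith
      simp [this]
  -- RHS = double integral swapped
  have hR : ∫⁻ z in Ioi (0:ℝ), H z * ENNReal.ofReal (z ^ (u+1) / (u+1))
      = ∫⁻ z : ℝ, ∫⁻ x : ℝ, F x z := by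
    rw [← lintegral_indicator measurableSet_Ioi]
    congr 1
    ext z
    by_cases hz : z ∈ Ioi (0:ℝ)
    · rw [indicator_of_mem hz]
      have : ∀ x : ℝ, F x z = (Ioo 0 z).indicator (fun x => ENNReal.ofReal (x ^ u) * H z) x := by
        intro x
        rw [hF]
        by_cases hx : 0 < x ∧ x < z
        · simp only [indicator, mem_setOf_eq, mem_Ioo, hx, if_true]
        · simp only [indicator, mem_setOf_eq, mem_Ioo, hx, if_false]
      simp_rw [this]
      rw [lintegral_indicator measurableSet_Ioo]
      rw [lintegral_mul_const _ ((measurable_id'.pow_const u).ennreal_ofReal),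
        lint_Ioo_rpow hu hz.out, mul_comm]
    · have hz' : z ≤ 0 := by simpa using hz
      rw [indicator_of_notMem hz]
      have : ∀ x : ℝ, F x z = 0 := by
        intro x; rw [hF]; apply indicator_of_notMem
        simp only [mem_setOf_eq, not_and_or]
        by_cases hx : 0 < x
        · right; simp; linarith
        · left; exact hx
      simp [this]
  rw [hL, hR]
  exact lintegral_lintegral_swap hFm.aemeasurable


lemma rpow_le_scale {t z : ℝ} (e : ℝ) (ht : 0 < t) (h1 : t/2 < z) (h2 : z < t) :
    z ^ e ≤ (max 1 (2 ^ (-e))) * t ^ e := by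
  have ht2 : (0:ℝ) < t/2 := by linarith
  have hz0 : 0 < z := lt_trans ht2 h1
  rcases le_or_gt 0 e with he | he
  · calc z ^ e ≤ t ^ e := Real.rpow_le_rpow hz0.le h2.le he
      _ = 1 * t ^ e := (one_mul _).symm
      _ ≤ _ := by
        have : (0:ℝ) ≤ t ^ e := Real.rpow_nonneg ht.le e
        exact mul_le_mul_of_nonneg_right (le_max_left _ _) this
  · calc z ^ e ≤ (t/2) ^ e := Real.rpow_le_rpow_of_nonpos ht2 h1.le he.le
      _ = 2 ^ (-e) * t ^ e := by
        rw [Real.div_rpow ht.le (by norm_num), Real.rpow_neg (by norm_num)]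
        rw [div_eq_mul_inv, mul_comm]
      _ ≤ _ := by
        have : (0:ℝ) ≤ t ^ e := Real.rpow_nonneg ht.le e
        exact mul_le_mul_of_nonneg_right (le_max_right _ _) this


lemma beta_int {p : ℝ} (hp : 1 < p) {G : ℝ} (hG : 0 ≤ G) :
    ∫⁻ l in Ioi (0:ℝ), ENNReal.ofReal (G - l) * ENNReal.ofReal (l ^ (p-2))
      = ENNReal.ofReal (G ^ p / (p*(p-1))) := by
  have hp0 : (0:ℝ) < p := by linarith
  rcases eq_or_lt_of_le hG with hG0 | hG0
  · rw [← hG0]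
    rw [Real.zero_rpow (ne_of_gt hp0), zero_div, ENNReal.ofReal_zero]
    rw [← lintegral_zero (μ := volume.restrict (Ioi (0:ℝ)))]
    apply setLIntegral_congr_fun_ae measurableSet_Ioi
    filter_upwards with l hl
    rw [ENNReal.ofReal_of_nonpos (by linarith [hl.out]), zero_mul]
  · have hsplit : Ioi (0:ℝ) = Ioo 0 G ∪ Ici G := (Ioo_union_Ici_eq_Ioi hG0).symm
    rw [hsplit, lintegral_union measurableSet_Ici (Disjoint.mono_left Ioo_subset_Iio_self (Iio_disjoint_Ici le_rfl))]
    have h2 : ∫⁻ l in Ici G, ENNReal.ofReal (G - l) * ENNReal.ofReal (l ^ (p-2)) = 0 := by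
      rw [← lintegral_zero (μ := volume.restrict (Ici G))]
      apply setLIntegral_congr_fun_ae measurableSet_Ici
      filter_upwards with l hl
      rw [ENNReal.ofReal_of_nonpos (by linarith [hl.out]), zero_mul]
    rw [h2, add_zero]
    have heq : ∫⁻ l in Ioo (0:ℝ) G, ENNReal.ofReal (G - l) * ENNReal.ofReal (l ^ (p-2))
        = ∫⁻ l in Ioo (0:ℝ) G, ENNReal.ofReal (G * l ^ (p-2) - l ^ (p-1)) := by
      apply setLIntegral_congr_fun_ae measurableSet_Ioo
      filter_upwards with l hl
      rw [← ENNReal.ofReal_mul (by linarith [hl.2])]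
      congr 1
      have : l ^ (p-1) = l ^ (p-2) * l := by
        rw [show p - 1 = (p-2) + 1 by ring, Real.rpow_add_one (ne_of_gt hl.1)]
      rw [this]; ring
    rw [heq]
    have hi1 : IntegrableOn (fun l : ℝ => l ^ (p-2)) (Ioo 0 G) volume := by
      have := intervalIntegral.intervalIntegrable_rpow' (a := 0) (b := G) (by linarith : (-1:ℝ) < p-2)
      rw [intervalIntegrable_iff_integrableOn_Ioo_of_le hG0.le] at this
      exact this
    have hi2 : IntegrableOn (fun l : ℝ => l ^ (p-1)) (Ioo 0 G) volume := by
      have := intervalIntegral.intervalIntegrable_rpow' (a := 0) (b := G) (by linarith : (-1:ℝ) < p-1)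
      rw [intervalIntegrable_iff_integrableOn_Ioo_of_le hG0.le] at this
      exact this
    have hint : IntegrableOn (fun l : ℝ => G * l ^ (p-2) - l ^ (p-1)) (Ioo 0 G) volume :=
      (hi1.const_mul G).sub hi2
    rw [← MeasureTheory.ofReal_integral_eq_lintegral_ofReal hint ?nn]
    case nn =>
      filter_upwards [self_mem_ae_restrict measurableSet_Ioo] with l hl
      have h1 : l ^ (p-1) = l ^ (p-2) * l := by
        rw [show p - 1 = (p-2) + 1 by ring, Real.rpow_add_one (ne_of_gt hl.1)]
      simp only [Pi.zero_apply]
      rw [h1]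
      have h0 : 0 ≤ (G - l) * l ^ (p-2) := by
        apply mul_nonneg (by linarith [hl.2]) (Real.rpow_nonneg hl.1.le _)
      have hx : (G - l) * l ^ (p-2) = G * l ^ (p-2) - l ^ (p-2) * l := by ring
      linarith
    congr 1
    rw [integral_sub (hi1.const_mul G) hi2]
    simp_rw [← smul_eq_mul]
    rw [integral_smul]
    simp only [smul_eq_mul]
    have e1 : ∫ l in Ioo (0:ℝ) G, l ^ (p-2) = G ^ (p-1) / (p-1) := by
      rw [← integral_Ioc_eq_integral_Ioo, ← intervalIntegral.integral_of_le hG0.le,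
        integral_rpow (Or.inl (by linarith))]
      rw [Real.zero_rpow (by linarith : p - 2 + 1 ≠ 0)]
      rw [show p - 2 + 1 = p - 1 by ring]
      ring
    have e2 : ∫ l in Ioo (0:ℝ) G, l ^ (p-1) = G ^ p / p := by
      rw [← integral_Ioc_eq_integral_Ioo, ← intervalIntegral.integral_of_le hG0.le,
        integral_rpow (Or.inl (by linarith))]
      rw [Real.zero_rpow (by linarith : p - 1 + 1 ≠ 0)]
      rw [show p - 1 + 1 = p by ring]
      ring
    rw [e1, e2]
    have e3 : G * (G ^ (p-1) / (p-1)) = G ^ p / (p - 1) := by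
      rw [show p = (p-1) + 1 by ring, Real.rpow_add_one (ne_of_gt hG0)]
      ring_nf
    rw [e3]
    have h1 : p - 1 ≠ 0 := by linarith
    have h2 : p ≠ 0 := ne_of_gt hp0
    field_simp
    ring


lemma branch1 (p γ η q s' : ℝ) (hp : 1 < p) (hq : q = p/(p-1))
    (hs'1 : s' < 1) (hs'2 : s' ≤ η * q)
    (hβ : (η-1)*p - γ + (1-s')*(p-1) < 0) :
    ∃ K : ℝ≥0∞, K ≠ ⊤ ∧ ∀ f : ℝ → ℝ, Measurable f →
      (∫⁻ x in Ioi (0:ℝ), (Tmax η f x) ^ p * ENNReal.ofReal (x ^ γ))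
        ≤ K * ∫⁻ z in Ioi (0:ℝ), ENNReal.ofReal (|f z| ^ p * z ^ γ) := by
  have hp0 : (0:ℝ) < p := by linarith
  have hp1 : (0:ℝ) < p - 1 := by linarith
  have hq1 : 1 < q := by rw [hq]; rw [lt_div_iff₀ hp1]; linarith
  have hq0 : (0:ℝ) < q := by linarith
  have conj : p.HolderConjugate q := (Real.holderConjugate_iff_eq_conjExponent hp).mpr hq
  set e : ℝ := (η - 1 - γ/p) * q with he
  set m : ℝ := max 1 (2 ^ (-e)) with hm
  set cJ : ℝ := 1/(1-s') with hcJ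
  have hcJ0 : 0 < cJ := by rw [hcJ]; have h1s : (0:ℝ) < 1 - s' := by linarith
                           positivity
  have hm0 : 0 < m := lt_of_lt_of_le one_pos (le_max_left _ _)
  set c₂ : ℝ := (m * cJ) ^ (1/q) with hc₂
  have hc₂0 : 0 < c₂ := Real.rpow_pos_of_pos (by positivity) _
  set β : ℝ := (η-1)*p - γ + (1-s')*(p-1) with hβdef
  have hβ0 : β < 0 := hβ
  set a' : ℝ := (s' - η*q)/q with ha'
  set K : ℝ≥0∞ := ENNReal.ofReal (c₂ ^ p * (1/(-β))) with hK
  refine ⟨K, ENNReal.ofReal_ne_top, ?_⟩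
  intro f hf
  -- the tail majorant
  set G : ℝ → ℝ≥0∞ := fun x => ∫⁻ z in Ioi x, ENNReal.ofReal (|f z| ^ p * z ^ (γ+β)) with hG
  have hHm : Measurable fun z : ℝ => ENNReal.ofReal (|f z| ^ p * z ^ (γ+β)) :=
    ((hf.abs.pow measurable_const).mul (measurable_id'.pow measurable_const)).ennreal_ofReal
  -- pointwise: for x > 0, Tmax η f x ≤ ofReal (c₂ * x ^ a') * (G x) ^ (1/p)
  have main : ∀ x : ℝ, 0 < x →
      Tmax η f x ≤ ENNReal.ofReal (c₂ * x ^ a') * (G x) ^ (1/p) := by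
    intro x hx0
    apply iSup₂_le
    intro t ht
    have ht2x : 2 * x < t := ht
    have ht0 : 0 < t := by linarith
    have hxt2 : x < t/2 := by linarith
    set φ : ℝ → ℝ≥0∞ := fun z => ENNReal.ofReal (|f z| * z ^ (γ/p)) with hφ
    set ψ : ℝ → ℝ≥0∞ := fun z => ENNReal.ofReal (z ^ (η-1-γ/p) * (t - z + x) ^ (-η)) with hψ
    have hφm : Measurable φ := ((hf.abs).mul (measurable_id'.pow measurable_const)).ennreal_ofReal
    have hψm : Measurable ψ := ((measurable_id'.pow measurable_const).mul
      (((measurable_const.sub measurable_id').add_const x).pow measurable_const)).ennreal_ofReal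
    -- rewrite integrand as product
    have key1 : ∫⁻ z in Ioo (t/2) t, ENNReal.ofReal (z ^ (η - 1) * |f z| * (t - z + x) ^ (-η))
        = ∫⁻ z in Ioo (t/2) t, (φ * ψ) z := by
      apply setLIntegral_congr_fun_ae measurableSet_Ioo
      filter_upwards with z hz
      have hz0 : 0 < z := lt_trans (by linarith : (0:ℝ) < t/2) hz.1
      simp only [hφ, hψ, Pi.mul_apply]
      rw [← ENNReal.ofReal_mul (by positivity)]
      congr 1
      rw [show η - 1 = γ/p + (η-1-γ/p) by ring, Real.rpow_add hz0]
      ring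
    have holder := ENNReal.lintegral_mul_le_Lp_mul_Lq (volume.restrict (Ioo (t/2) t)) conj
      hφm.aemeasurable hψm.aemeasurable
    -- A-part
    have hA : ∫⁻ z in Ioo (t/2) t, φ z ^ p
        = ∫⁻ z in Ioo (t/2) t, ENNReal.ofReal (|f z| ^ p * z ^ γ) := by
      apply setLIntegral_congr_fun_ae measurableSet_Ioo
      filter_upwards with z hz
      have hz0 : 0 < z := lt_trans (by linarith : (0:ℝ) < t/2) hz.1
      rw [hφ, ENNReal.ofReal_rpow_of_nonneg (by positivity) hp0.le]
      congr 1
      rw [Real.mul_rpow (abs_nonneg _) (Real.rpow_nonneg hz0.le _),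
        ← Real.rpow_mul hz0.le, div_mul_cancel₀ _ (ne_of_gt hp0)]
    -- B-part
    have hB : ∫⁻ z in Ioo (t/2) t, ψ z ^ q
        ≤ ENNReal.ofReal (m * cJ * t ^ (e + 1 - s') * x ^ (s' - η*q)) := by
      have step : ∀ z ∈ Ioo (t/2) t, ψ z ^ q ≤
          ENNReal.ofReal (m * t ^ e * x ^ (s' - η*q)) * ENNReal.ofReal ((t - z + x) ^ (-s')) := by
        intro z hz
        have hz0 : 0 < z := lt_trans (by linarith : (0:ℝ) < t/2) hz.1
        have hv0 : 0 < t - z + x := by have := hz.2; linarith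
        have hxv : x ≤ t - z + x := by have := hz.2; linarith
        rw [hψ, ENNReal.ofReal_rpow_of_nonneg (by positivity) hq0.le,
          ← ENNReal.ofReal_mul (by positivity)]
        apply ENNReal.ofReal_le_ofReal
        rw [Real.mul_rpow (Real.rpow_nonneg hz0.le _) (Real.rpow_nonneg hv0.le _),
          ← Real.rpow_mul hz0.le, ← Real.rpow_mul hv0.le]
        have h1 : z ^ ((η-1-γ/p)*q) ≤ m * t ^ e := by
          rw [he]; exact rpow_le_scale _ ht0 hz.1 hz.2
        have h2 : (t - z + x) ^ (-η*q) ≤ x ^ (s' - η*q) * (t - z + x) ^ (-s') := by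
          have : (t - z + x) ^ (-η*q) = (t - z + x) ^ (s' - η*q) * (t - z + x) ^ (-s') := by
            rw [← Real.rpow_add hv0]; ring_nf
          rw [this]
          apply mul_le_mul_of_nonneg_right _ (Real.rpow_nonneg hv0.le _)
          exact Real.rpow_le_rpow_of_nonpos hx0 hxv (by linarith [hs'2])
        calc z ^ ((η-1-γ/p)*q) * (t - z + x) ^ (-η*q)
            ≤ (m * t ^ e) * (x ^ (s' - η*q) * (t - z + x) ^ (-s')) := by
              apply mul_le_mul h1 h2 (by positivity) (by positivity)
          _ = m * t ^ e * x ^ (s' - η*q) * (t - z + x) ^ (-s') := by ring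
      calc ∫⁻ z in Ioo (t/2) t, ψ z ^ q
          ≤ ∫⁻ z in Ioo (t/2) t,
              ENNReal.ofReal (m * t ^ e * x ^ (s' - η*q)) * ENNReal.ofReal ((t - z + x) ^ (-s')) := by
            apply lintegral_mono_ae
            filter_upwards [ae_restrict_mem measurableSet_Ioo] with z hz
            exact step z hz
        _ = ENNReal.ofReal (m * t ^ e * x ^ (s' - η*q)) *
              ∫⁻ z in Ioo (t/2) t, ENNReal.ofReal ((t - z + x) ^ (-s')) := by
            rw [lintegral_const_mul' _ _ ENNReal.ofReal_ne_top]
        _ ≤ ENNReal.ofReal (m * t ^ e * x ^ (s' - η*q)) * ENNReal.ofReal (t ^ (1 - s') * cJ) := by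
            gcongr
            have refl : ∫⁻ z in Ioo (t/2) t, ENNReal.ofReal ((t - z + x) ^ (-s'))
                = ∫⁻ v in Ioo x (x + t/2), ENNReal.ofReal (v ^ (-s')) := by
              have : ∀ z : ℝ, (t - z + x) = (t + x) - z := by intro z; ring
              simp_rw [this]
              rw [lint_refl (t+x) (t/2) t _ ((measurable_id'.pow measurable_const).ennreal_ofReal)]
              congr 1 <;> ring
            rw [refl]
            calc ∫⁻ v in Ioo x (x + t/2), ENNReal.ofReal (v ^ (-s'))
                ≤ ∫⁻ v in Ioo 0 t, ENNReal.ofReal (v ^ (-s')) := by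
                  apply lintegral_mono_set
                  intro v hv
                  exact ⟨lt_trans hx0 hv.1, by have := hv.2; linarith⟩
              _ = ENNReal.ofReal (t ^ (-s'+1)/(-s'+1)) := lint_Ioo_rpow (by linarith) ht0
              _ = ENNReal.ofReal (t ^ (1-s') * cJ) := by
                  rw [hcJ]; congr 1; rw [show -s'+1 = 1-s' by ring]; ring
        _ = ENNReal.ofReal (m * cJ * t ^ (e + 1 - s') * x ^ (s' - η*q)) := by
            rw [← ENNReal.ofReal_mul (by positivity)]
            congr 1
            rw [show e + 1 - s' = e + (1 - s') by ring, Real.rpow_add ht0]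
            ring
    -- combine via Hölder
    have hβp : (e + 1 - s')/q = β/p := by
      rw [he, hβdef, hq]
      field_simp
      ring
    have hBq : (∫⁻ z in Ioo (t/2) t, ψ z ^ q) ^ (1/q)
        ≤ ENNReal.ofReal (c₂ * x ^ a') * ENNReal.ofReal (t ^ (β/p)) := by
      calc (∫⁻ z in Ioo (t/2) t, ψ z ^ q) ^ (1/q)
          ≤ (ENNReal.ofReal (m * cJ * t ^ (e + 1 - s') * x ^ (s' - η*q))) ^ (1/q) := by
            exact ENNReal.rpow_le_rpow hB (by positivity)
        _ = ENNReal.ofReal ((m * cJ * t ^ (e + 1 - s') * x ^ (s' - η*q)) ^ (1/q)) := by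
            rw [ENNReal.ofReal_rpow_of_nonneg (by positivity) (by positivity)]
        _ = ENNReal.ofReal (c₂ * x ^ a') * ENNReal.ofReal (t ^ (β/p)) := by
            rw [← ENNReal.ofReal_mul (by positivity)]
            congr 1
            rw [Real.mul_rpow (by positivity) (Real.rpow_nonneg hx0.le _),
              Real.mul_rpow (by positivity) (Real.rpow_nonneg ht0.le _),
              ← Real.rpow_mul ht0.le, ← Real.rpow_mul hx0.le, hc₂]
            rw [show (e + 1 - s') * (1/q) = (e+1-s')/q by ring, hβp, ha']
            rw [show (s' - η*q) * (1/q) = (s' - η*q)/q by ring]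
            ring
    -- passage A * t^β ≤ G x
    have hAG : ENNReal.ofReal (t ^ β) * ∫⁻ z in Ioo (t/2) t, ENNReal.ofReal (|f z| ^ p * z ^ γ)
        ≤ G x := by
      rw [← lintegral_const_mul' _ _ ENNReal.ofReal_ne_top]
      calc ∫⁻ z in Ioo (t/2) t, ENNReal.ofReal (t ^ β) * ENNReal.ofReal (|f z| ^ p * z ^ γ)
          ≤ ∫⁻ z in Ioo (t/2) t, ENNReal.ofReal (|f z| ^ p * z ^ (γ+β)) := by
            apply lintegral_mono_ae
            filter_upwards [ae_restrict_mem measurableSet_Ioo] with z hz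
            have hz0 : 0 < z := lt_trans (by linarith : (0:ℝ) < t/2) hz.1
            rw [← ENNReal.ofReal_mul (Real.rpow_nonneg ht0.le _)]
            apply ENNReal.ofReal_le_ofReal
            have htz : t ^ β ≤ z ^ β := Real.rpow_le_rpow_of_nonpos hz0 hz.2.le hβ0.le
            calc t ^ β * (|f z| ^ p * z ^ γ) ≤ z ^ β * (|f z| ^ p * z ^ γ) := by
                  apply mul_le_mul_of_nonneg_right htz (by positivity)
              _ = |f z| ^ p * (z ^ γ * z ^ β) := by ring
              _ = |f z| ^ p * z ^ (γ+β) := by rw [← Real.rpow_add hz0]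
        _ ≤ G x := by
            rw [hG]
            apply lintegral_mono_set
            intro z hz
            exact lt_trans hxt2 hz.1
    -- final per-t bound
    calc ∫⁻ z in Ioo (t/2) t, ENNReal.ofReal (z ^ (η - 1) * |f z| * (t - z + x) ^ (-η))
        = ∫⁻ z in Ioo (t/2) t, (φ * ψ) z := key1
      _ ≤ (∫⁻ z in Ioo (t/2) t, φ z ^ p) ^ (1/p) * (∫⁻ z in Ioo (t/2) t, ψ z ^ q) ^ (1/q) := holder
      _ ≤ (∫⁻ z in Ioo (t/2) t, φ z ^ p) ^ (1/p) *
            (ENNReal.ofReal (c₂ * x ^ a') * ENNReal.ofReal (t ^ (β/p))) := by gcongr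
      _ = ENNReal.ofReal (c₂ * x ^ a') *
            ((ENNReal.ofReal (t ^ β) * ∫⁻ z in Ioo (t/2) t, φ z ^ p) ^ (1/p)) := by
          rw [ENNReal.mul_rpow_of_nonneg _ _ (by positivity : (0:ℝ) ≤ 1/p)]
          have hrw : ENNReal.ofReal (t ^ (β/p)) = ENNReal.ofReal (t ^ β) ^ (1/p) := by
            rw [ENNReal.ofReal_rpow_of_pos (Real.rpow_pos_of_pos ht0 _),
              ← Real.rpow_mul ht0.le, show β * (1/p) = β/p by ring]
          rw [hrw]; ring
      _ ≤ ENNReal.ofReal (c₂ * x ^ a') * (G x) ^ (1/p) := by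
          gcongr
          rw [hA] at *
          exact hAG
  -- now integrate
  have intbound : ∫⁻ x in Ioi (0:ℝ), (Tmax η f x) ^ p * ENNReal.ofReal (x ^ γ)
      ≤ ENNReal.ofReal (c₂ ^ p) * ∫⁻ x in Ioi (0:ℝ), ENNReal.ofReal (x ^ (a'*p + γ)) * G x := by
    rw [← lintegral_const_mul' _ _ ENNReal.ofReal_ne_top]
    apply lintegral_mono_ae
    filter_upwards [ae_restrict_mem measurableSet_Ioi] with x hx
    have hx0 : (0:ℝ) < x := hx
    calc (Tmax η f x) ^ p * ENNReal.ofReal (x ^ γ)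
        ≤ (ENNReal.ofReal (c₂ * x ^ a') * (G x) ^ (1/p)) ^ p * ENNReal.ofReal (x ^ γ) := by
          gcongr
          exact main x hx0
      _ = ENNReal.ofReal (c₂ ^ p) * (ENNReal.ofReal (x ^ (a'*p + γ)) * G x) := by
          rw [ENNReal.mul_rpow_of_nonneg _ _ hp0.le,
            ← ENNReal.rpow_mul, one_div_mul_cancel (ne_of_gt hp0), ENNReal.rpow_one,
            ENNReal.ofReal_rpow_of_nonneg (by positivity) hp0.le,
            Real.mul_rpow hc₂0.le (Real.rpow_nonneg hx0.le _), ← Real.rpow_mul hx0.le,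
            show a' * p + γ = a' * p + γ from rfl]
          rw [ENNReal.ofReal_mul (by positivity), Real.rpow_add hx0 (a'*p) γ] at *
          rw [ENNReal.ofReal_mul (Real.rpow_nonneg hx0.le _)]
          ring
  have hu : a'*p + γ = -β - 1 := by
    rw [ha', hβdef, hq]
    field_simp
    ring
  have hu1 : -1 < a'*p + γ := by rw [hu]; linarith
  have swap := swap_power (a'*p + γ) hu1 _ hHm
  rw [swap] at intbound
  have final : ∫⁻ z in Ioi (0:ℝ), ENNReal.ofReal (|f z| ^ p * z ^ (γ+β)) *
        ENNReal.ofReal (z ^ ((a'*p + γ)+1) / ((a'*p + γ)+1))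
      = ENNReal.ofReal (1/(-β)) * ∫⁻ z in Ioi (0:ℝ), ENNReal.ofReal (|f z| ^ p * z ^ γ) := by
    rw [← lintegral_const_mul' _ _ ENNReal.ofReal_ne_top]
    apply setLIntegral_congr_fun_ae measurableSet_Ioi
    filter_upwards with z hz
    have hz0 : (0:ℝ) < z := hz
    have hmb : (0:ℝ) < -β := by linarith
    have h1 : (a'*p + γ) + 1 = -β := by rw [hu]; ring
    rw [h1, ← ENNReal.ofReal_mul (by positivity),
      ← ENNReal.ofReal_mul (one_div_nonneg.mpr hmb.le)]
    congr 1
    have hzz : z ^ (γ+β) * z ^ (-β) = z ^ γ := by rw [← Real.rpow_add hz0]; ring_nf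
    calc |f z| ^ p * z ^ (γ+β) * (z ^ (-β)/(-β))
        = (|f z| ^ p * (z ^ (γ+β) * z ^ (-β))) * (1/(-β)) := by ring
      _ = 1/(-β) * (|f z| ^ p * z ^ γ) := by rw [hzz]; ring
  rw [final] at intbound
  rw [hK, ENNReal.ofReal_mul (by positivity), mul_assoc]
  exact intbound


lemma branch2 (p γ η : ℝ) (hp : 1 < p) (hη : 1 < η) (hγ : γ = (η-1)*p) :
    ∃ K : ℝ≥0∞, K ≠ ⊤ ∧ ∀ f : ℝ → ℝ, Measurable f →
      (∫⁻ x in Ioi (0:ℝ), (Tmax η f x) ^ p * ENNReal.ofReal (x ^ γ))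
        ≤ K * ∫⁻ z in Ioi (0:ℝ), ENNReal.ofReal (|f z| ^ p * z ^ γ) := by
  have hp0 : (0:ℝ) < p := by linarith
  have hp1 : (0:ℝ) < p - 1 := by linarith
  have hη1 : (0:ℝ) < η - 1 := by linarith
  set c : ℝ := 1/(η-1) with hc
  have hc0 : 0 < c := by rw [hc]; positivity
  set K : ℝ≥0∞ := ENNReal.ofReal ((2*c)^p) * ENNReal.ofReal p * ENNReal.ofReal (1/c) *
      ENNReal.ofReal (1/(p*(p-1))) with hK
  have hKtop : K ≠ ⊤ := by
    rw [hK]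
    exact ENNReal.mul_ne_top (ENNReal.mul_ne_top (ENNReal.mul_ne_top ENNReal.ofReal_ne_top
      ENNReal.ofReal_ne_top) ENNReal.ofReal_ne_top) ENNReal.ofReal_ne_top
  have hKne0 : K ≠ 0 := by
    rw [hK]
    have kpos : ∀ r : ℝ, 0 < r → (ENNReal.ofReal r) ≠ 0 := fun r hr => (ENNReal.ofReal_pos.mpr hr).ne'
    have h1 : (0:ℝ) < (2*c)^p := Real.rpow_pos_of_pos (by linarith) _
    exact mul_ne_zero (mul_ne_zero (mul_ne_zero (kpos _ h1) (kpos _ hp0))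
      (kpos _ (by positivity))) (kpos _ (by positivity))
  refine ⟨K, hKtop, ?_⟩
  intro f hf
  set Q : ℝ≥0∞ := ∫⁻ z in Ioi (0:ℝ), ENNReal.ofReal (|f z| ^ p * z ^ γ) with hQdef
  by_cases hQtop : Q = ⊤
  · rw [hQtop, ENNReal.mul_top hKne0]
    exact le_top
  -- main case : Q finite
  set g : ℝ → ℝ := fun z => z ^ (η-1) * |f z| with hg
  have hgm : Measurable g := (measurable_id'.pow measurable_const).mul hf.abs
  set A : ℝ → ℝ≥0∞ := fun l => ∫⁻ z in Ioi (0:ℝ), ENNReal.ofReal (g z - l) with hA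
  -- g^p = |f|^p z^γ for z > 0
  have hgp : ∀ z : ℝ, 0 < z → g z ^ p = |f z| ^ p * z ^ γ := by
    intro z hz0
    rw [hg, Real.mul_rpow (Real.rpow_nonneg hz0.le _) (abs_nonneg _),
      ← Real.rpow_mul hz0.le, hγ]
    ring
  -- F1
  have hAle : ∀ l : ℝ, 0 < l → A l ≤ ENNReal.ofReal (l ^ (1-p)) * Q := by
    intro l hl
    rw [hA, hQdef, ← lintegral_const_mul' _ _ ENNReal.ofReal_ne_top]
    apply lintegral_mono_ae
    filter_upwards [ae_restrict_mem measurableSet_Ioi] with z hz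
    have hz0 : (0:ℝ) < z := hz
    rw [← ENNReal.ofReal_mul (Real.rpow_nonneg hl.le _)]
    apply ENNReal.ofReal_le_ofReal
    rcases le_or_gt (g z) l with hgl | hgl
    · have h1 : 0 ≤ l ^ (1-p) * (|f z| ^ p * z ^ γ) := by
        have := Real.rpow_nonneg hl.le (1-p)
        have h2 : (0:ℝ) ≤ |f z| ^ p * z ^ γ := by
          apply mul_nonneg (Real.rpow_nonneg (abs_nonneg _) _) (Real.rpow_nonneg hz0.le _)
        positivity
      linarith
    · have hgz0 : 0 < g z := lt_trans hl hgl
      have e : g z ^ p = g z * g z ^ (p-1) := by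
        nth_rewrite 1 [show p = 1 + (p-1) by ring]
        rw [Real.rpow_add hgz0, Real.rpow_one]
      have h2 : (1:ℝ) ≤ (g z / l) ^ (p-1) := by
        calc (1:ℝ) = 1 ^ (p-1) := (Real.one_rpow _).symm
          _ ≤ (g z / l) ^ (p-1) :=
            Real.rpow_le_rpow (by norm_num) ((one_le_div hl).mpr hgl.le) hp1.le
      calc g z - l ≤ g z := by linarith
        _ = g z * 1 := (mul_one _).symm
        _ ≤ g z * (g z / l) ^ (p-1) := by
            exact mul_le_mul_of_nonneg_left h2 hgz0.le
        _ = l ^ (1-p) * (|f z| ^ p * z ^ γ) := by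
            rw [← hgp z hz0, Real.div_rpow hgz0.le hl.le, e,
              show (1:ℝ)-p = -(p-1) by ring, Real.rpow_neg hl.le]
            ring
  have hAfin : ∀ l : ℝ, 0 < l → A l ≠ ⊤ := by
    intro l hl
    exact ne_top_of_le_ne_top (ENNReal.mul_ne_top ENNReal.ofReal_ne_top hQtop) (hAle l hl)
  have hofA : ∀ l : ℝ, 0 < l → ENNReal.ofReal ((A l).toReal) = A l :=
    fun l hl => ENNReal.ofReal_toReal (hAfin l hl)
  -- the sets S x and Lam
  set S : ℝ → Set ℝ := fun x => {l : ℝ | 0 < l ∧ (A l).toReal ≤ c*l*x} with hS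
  set Lam : ℝ → ℝ := fun x => sInf (S x) with hLam
  have hSbdd : ∀ x : ℝ, BddBelow (S x) := fun x => ⟨0, fun l hl => hl.1.le⟩
  have hSne : ∀ x : ℝ, 0 < x → (S x).Nonempty := by
    intro x hx
    set l : ℝ := max 1 ((Q.toReal/(c*x)) ^ (1/p)) with hl
    have hl1 : (1:ℝ) ≤ l := le_max_left _ _
    have hl0 : (0:ℝ) < l := lt_of_lt_of_le one_pos hl1
    refine ⟨l, hl0, ?_⟩
    have hQr : 0 ≤ Q.toReal := ENNReal.toReal_nonneg
    have hlp : Q.toReal / (c*x) ≤ l ^ p := by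
      calc Q.toReal/(c*x) = ((Q.toReal/(c*x)) ^ (1/p)) ^ p := by
            rw [← Real.rpow_mul (by positivity : (0:ℝ) ≤ Q.toReal/(c*x)),
              one_div_mul_cancel (ne_of_gt hp0), Real.rpow_one]
        _ ≤ l ^ p := Real.rpow_le_rpow (Real.rpow_nonneg (by positivity) _)
            (le_max_right _ _) hp0.le
    have h1 : (A l).toReal ≤ l ^ (1-p) * Q.toReal := by
      calc (A l).toReal ≤ (ENNReal.ofReal (l ^ (1-p)) * Q).toReal :=
            ENNReal.toReal_mono (ENNReal.mul_ne_top ENNReal.ofReal_ne_top hQtop) (hAle l hl0)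
        _ = l ^ (1-p) * Q.toReal := by
            rw [ENNReal.toReal_mul, ENNReal.toReal_ofReal (Real.rpow_nonneg hl0.le _)]
    have h2 : Q.toReal ≤ c*x*l^p := by
      rw [div_le_iff₀ (by positivity)] at hlp
      nlinarith [hlp]
    calc (A l).toReal ≤ l ^ (1-p) * Q.toReal := h1
      _ ≤ l ^ (1-p) * (c*x*l^p) := by
          exact mul_le_mul_of_nonneg_left h2 (Real.rpow_nonneg hl0.le _)
      _ = c*x*(l^(1-p) * l^p) := by ring
      _ = c*l*x := by
          rw [← Real.rpow_add hl0, show (1:ℝ)-p+p = 1 by ring, Real.rpow_one]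
          ring
  have hLam_nonneg : ∀ x : ℝ, 0 < x → 0 ≤ Lam x := fun x hx =>
    le_csInf (hSne x hx) (fun l hl => hl.1.le)
  have hLam_anti : ∀ x y : ℝ, 0 < x → x ≤ y → Lam y ≤ Lam x := by
    intro x y hx hxy
    apply csInf_le_csInf (hSbdd y) (hSne x hx)
    intro l hl
    refine ⟨hl.1, le_trans hl.2 ?_⟩
    have h0 : 0 ≤ c * l := mul_nonneg hc0.le hl.1.le
    calc c*l*x = (c*l)*x := by ring
      _ ≤ (c*l)*y := mul_le_mul_of_nonneg_left hxy h0
      _ = c*l*y := by ring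
  -- pointwise bound P0
  have P0 : ∀ x l : ℝ, 0 < x → 0 ≤ l →
      Tmax η f x ≤ ENNReal.ofReal (x^(-η)) * A l + ENNReal.ofReal (l * (x^(1-η) * c)) := by
    intro x l hx0 hl0
    apply iSup₂_le
    intro t ht
    have ht2x : 2*x < t := ht
    have ht0 : 0 < t := by linarith
    have hxt2 : x < t/2 := by linarith
    have key : ∀ z ∈ Ioo (t/2) t,
        ENNReal.ofReal (z ^ (η-1) * |f z| * (t - z + x)^(-η))
          ≤ ENNReal.ofReal (g z - l) * ENNReal.ofReal (x^(-η))
            + ENNReal.ofReal l * ENNReal.ofReal ((t - z + x)^(-η)) := by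
      intro z hz
      have hz0 : 0 < z := lt_trans (by linarith) hz.1
      have hv0 : 0 < t - z + x := by have := hz.2; linarith
      have hxv : x ≤ t - z + x := by have := hz.2; linarith
      have hw : (t - z + x) ^ (-η) ≤ x ^ (-η) :=
        Real.rpow_le_rpow_of_nonpos hx0 hxv (by linarith)
      have hsplit : ENNReal.ofReal (g z) ≤ ENNReal.ofReal (g z - l) + ENNReal.ofReal l := by
        calc ENNReal.ofReal (g z) = ENNReal.ofReal ((g z - l) + l) := by norm_num
          _ ≤ _ := ENNReal.ofReal_add_le
      calc ENNReal.ofReal (z ^ (η-1) * |f z| * (t - z + x)^(-η))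
          = ENNReal.ofReal (g z) * ENNReal.ofReal ((t-z+x)^(-η)) := by
            rw [← ENNReal.ofReal_mul (by rw [hg]; positivity)]
        _ ≤ (ENNReal.ofReal (g z - l) + ENNReal.ofReal l) * ENNReal.ofReal ((t-z+x)^(-η)) := by
            gcongr
        _ = ENNReal.ofReal (g z - l) * ENNReal.ofReal ((t-z+x)^(-η))
            + ENNReal.ofReal l * ENNReal.ofReal ((t-z+x)^(-η)) := by rw [add_mul]
        _ ≤ ENNReal.ofReal (g z - l) * ENNReal.ofReal (x^(-η))
            + ENNReal.ofReal l * ENNReal.ofReal ((t-z+x)^(-η)) := by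
            gcongr
    calc (∫⁻ z in Ioo (t/2) t, ENNReal.ofReal (z ^ (η - 1) * |f z| * (t - z + x) ^ (-η)))
        ≤ ∫⁻ z in Ioo (t/2) t, (ENNReal.ofReal (g z - l) * ENNReal.ofReal (x^(-η))
            + ENNReal.ofReal l * ENNReal.ofReal ((t - z + x)^(-η))) := by
          apply lintegral_mono_ae
          filter_upwards [ae_restrict_mem measurableSet_Ioo] with z hz using key z hz
      _ = (∫⁻ z in Ioo (t/2) t, ENNReal.ofReal (g z - l) * ENNReal.ofReal (x^(-η)))
            + ∫⁻ z in Ioo (t/2) t, ENNReal.ofReal l * ENNReal.ofReal ((t - z + x)^(-η)) :=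
          lintegral_add_left ((hgm.sub measurable_const).ennreal_ofReal.mul measurable_const) _
      _ ≤ ENNReal.ofReal (x^(-η)) * A l + ENNReal.ofReal (l * (x^(1-η) * c)) := by
          apply add_le_add
          · rw [lintegral_mul_const' _ _ ENNReal.ofReal_ne_top, mul_comm]
            gcongr
            rw [hA]
            apply lintegral_mono_set
            intro z hz
            exact lt_trans (lt_trans hx0 hxt2) hz.1
          · rw [lintegral_const_mul' _ _ ENNReal.ofReal_ne_top,
              ENNReal.ofReal_mul hl0]
            gcongr
            have hrefl : ∫⁻ z in Ioo (t/2) t, ENNReal.ofReal ((t - z + x)^(-η))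
                = ∫⁻ v in Ioo x (x + t/2), ENNReal.ofReal (v ^ (-η)) := by
              have hzz : ∀ z : ℝ, (t - z + x) = (t + x) - z := by intro z; ring
              simp_rw [hzz]
              rw [lint_refl (t+x) (t/2) t _ ((measurable_id'.pow measurable_const).ennreal_ofReal)]
              congr 1 <;> ring
            rw [hrefl]
            calc ∫⁻ v in Ioo x (x + t/2), ENNReal.ofReal (v ^ (-η))
                ≤ ∫⁻ v in Ioi x, ENNReal.ofReal (v ^ (-η)) := by
                  apply lintegral_mono_set
                  intro v hv
                  exact hv.1
              _ = ENNReal.ofReal (x ^ (-η+1) / (-(-η)-1)) := lint_Ioi_rpow (by linarith) hx0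
              _ = ENNReal.ofReal (x^(1-η) * c) := by
                  rw [hc, show -η+1 = 1-η by ring, show -(-η)-1 = η - 1 by ring]
                  congr 1
                  ring
  -- P5
  have P5 : ∀ x : ℝ, 0 < x →
      Tmax η f x * ENNReal.ofReal (x^(η-1)) ≤ ENNReal.ofReal (2*c*Lam x) := by
    intro x hx0
    have step : ∀ l ∈ S x, Tmax η f x * ENNReal.ofReal (x^(η-1)) ≤ ENNReal.ofReal (2*(c*l)) := by
      intro l hl
      have hl0 : 0 < l := hl.1
      have hP := P0 x l hx0 hl0.le
      have e1 : ENNReal.ofReal (x^(-η)) * ENNReal.ofReal (x^(η-1)) = ENNReal.ofReal x⁻¹ := by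
        rw [← ENNReal.ofReal_mul (Real.rpow_nonneg hx0.le _), ← Real.rpow_add hx0,
          show -η + (η-1) = -1 by ring, Real.rpow_neg_one]
      have e2 : ENNReal.ofReal (l * (x^(1-η) * c)) * ENNReal.ofReal (x^(η-1))
          = ENNReal.ofReal (c*l) := by
        rw [← ENNReal.ofReal_mul (by positivity)]
        congr 1
        rw [show l * (x^(1-η) * c) * x^(η-1) = c*l*(x^(1-η) * x^(η-1)) by ring,
          ← Real.rpow_add hx0, show (1:ℝ)-η + (η-1) = 0 by ring, Real.rpow_zero, mul_one]
      calc Tmax η f x * ENNReal.ofReal (x^(η-1))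
          ≤ (ENNReal.ofReal (x^(-η)) * A l + ENNReal.ofReal (l * (x^(1-η) * c)))
              * ENNReal.ofReal (x^(η-1)) := by gcongr
        _ = A l * (ENNReal.ofReal (x^(-η)) * ENNReal.ofReal (x^(η-1)))
              + ENNReal.ofReal (l * (x^(1-η) * c)) * ENNReal.ofReal (x^(η-1)) := by ring
        _ = A l * ENNReal.ofReal x⁻¹ + ENNReal.ofReal (c*l) := by rw [e1, e2]
        _ ≤ ENNReal.ofReal (c*l) + ENNReal.ofReal (c*l) := by
            gcongr
            rw [← hofA l hl0, ← ENNReal.ofReal_mul ENNReal.toReal_nonneg]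
            apply ENNReal.ofReal_le_ofReal
            calc (A l).toReal * x⁻¹ ≤ (c*l*x) * x⁻¹ := by
                  apply mul_le_mul_of_nonneg_right hl.2 (by positivity)
              _ = c*l := by field_simp
        _ = ENNReal.ofReal (2*(c*l)) := by
            rw [two_mul, ENNReal.ofReal_add (by positivity) (by positivity)]
    apply ENNReal.le_of_forall_pos_le_add
    intro ε hε _
    obtain ⟨l, hlS, hlt⟩ := Real.lt_sInf_add_pos (hSne x hx0)
      (show (0:ℝ) < (ε:ℝ)/(2*c) by positivity)
    calc Tmax η f x * ENNReal.ofReal (x^(η-1)) ≤ ENNReal.ofReal (2*(c*l)) := step l hlS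
      _ ≤ ENNReal.ofReal (2*c*Lam x + ε) := by
          apply ENNReal.ofReal_le_ofReal
          rw [hLam]
          have h2c : (0:ℝ) < 2*c := by linarith
          calc 2*(c*l) = (2*c)*l := by ring
            _ ≤ (2*c)*(sInf (S x) + (ε:ℝ)/(2*c)) := by
                apply mul_le_mul_of_nonneg_left hlt.le h2c.le
            _ = 2*c*sInf (S x) + ε := by field_simp
      _ ≤ ENNReal.ofReal (2*c*Lam x) + ENNReal.ofReal ε := ENNReal.ofReal_add_le
      _ = ENNReal.ofReal (2*c*Lam x) + ε := by rw [ENNReal.ofReal_coe_nnreal]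
  -- measurable antitone majorant
  set fL : ℝ → ℝ := fun x => Lam (Real.exp (Real.log x)) with hfL
  have hfLm : Measurable fL := by
    have hW : Antitone (fun y : ℝ => Lam (Real.exp y)) := fun y1 y2 h12 =>
      hLam_anti _ _ (Real.exp_pos _) (Real.exp_le_exp.mpr h12)
    exact hW.measurable.comp Real.measurable_log
  have hfLx : ∀ x : ℝ, 0 < x → fL x = Lam x := by
    intro x hx; rw [hfL]; simp [Real.exp_log hx]
  have hfL_nn : 0 ≤ᵐ[volume.restrict (Ioi (0:ℝ))] fL := by
    filter_upwards [ae_restrict_mem measurableSet_Ioi] with x hx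
    rw [hfLx x hx]; exact hLam_nonneg x hx
  have laycake := MeasureTheory.lintegral_rpow_eq_lintegral_meas_lt_mul
    (volume.restrict (Ioi (0:ℝ))) hfL_nn hfLm.aemeasurable hp0
  -- step L
  have stepL : ∫⁻ x in Ioi (0:ℝ), (Tmax η f x)^p * ENNReal.ofReal (x^γ)
      ≤ ENNReal.ofReal ((2*c)^p) * ∫⁻ x in Ioi (0:ℝ), ENNReal.ofReal (fL x ^ p) := by
    rw [← lintegral_const_mul' _ _ ENNReal.ofReal_ne_top]
    apply lintegral_mono_ae
    filter_upwards [ae_restrict_mem measurableSet_Ioi] with x hx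
    have hx0 : (0:ℝ) < x := hx
    have h1 : (Tmax η f x)^p * ENNReal.ofReal (x^γ)
        = (Tmax η f x * ENNReal.ofReal (x^(η-1)))^p := by
      rw [ENNReal.mul_rpow_of_nonneg _ _ hp0.le,
        ENNReal.ofReal_rpow_of_pos (Real.rpow_pos_of_pos hx0 _),
        ← Real.rpow_mul hx0.le, hγ]
    rw [h1]
    calc (Tmax η f x * ENNReal.ofReal (x^(η-1)))^p
        ≤ (ENNReal.ofReal (2*c*Lam x))^p := ENNReal.rpow_le_rpow (P5 x hx0) hp0.le
      _ = ENNReal.ofReal ((2*c)^p * fL x ^ p) := by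
          have hln := hLam_nonneg x hx0
          rw [ENNReal.ofReal_rpow_of_nonneg (by positivity) hp0.le]
          congr 1
          rw [Real.mul_rpow (by linarith) (hLam_nonneg x hx0), hfLx x hx0]
      _ = ENNReal.ofReal ((2*c)^p) * ENNReal.ofReal (fL x ^ p) := by
          rw [ENNReal.ofReal_mul (by positivity)]
  -- distribution bound
  have dist : ∀ l : ℝ, 0 < l →
      (volume.restrict (Ioi (0:ℝ))) {x | l < fL x} ≤ ENNReal.ofReal ((A l).toReal/(c*l)) := by
    intro l hl
    have hset : MeasurableSet {x : ℝ | l < fL x} := measurableSet_lt measurable_const hfLm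
    rw [Measure.restrict_apply hset]
    have hsub : {x : ℝ | l < fL x} ∩ Ioi 0 ⊆ Ioc 0 ((A l).toReal/(c*l)) := by
      intro x hx
      obtain ⟨hx1, hx2⟩ := hx
      have hx0 : (0:ℝ) < x := hx2
      refine ⟨hx0, ?_⟩
      by_contra hcon
      push_neg at hcon
      have hAx : (A l).toReal ≤ c*l*x := by
        rw [div_lt_iff₀ (by positivity)] at hcon
        nlinarith
      have hlS : l ∈ S x := ⟨hl, hAx⟩
      have hle : Lam x ≤ l := csInf_le (hSbdd x) hlS
      have : l < Lam x := by
        have := hx1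
        rwa [mem_setOf_eq, hfLx x hx0] at this
      linarith
    calc volume ({x : ℝ | l < fL x} ∩ Ioi 0)
        ≤ volume (Ioc 0 ((A l).toReal/(c*l))) := measure_mono hsub
      _ = ENNReal.ofReal ((A l).toReal/(c*l)) := by rw [Real.volume_Ioc, sub_zero]
  -- the tail integral
  have hswapm : Measurable (Function.uncurry fun (l z : ℝ) =>
      ENNReal.ofReal (g z - l) * ENNReal.ofReal (l ^ (p-2))) := by
    simp only [Function.uncurry_def]
    refine Measurable.mul (f := fun q : ℝ × ℝ => ENNReal.ofReal (g q.2 - q.1))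
      (g := fun q : ℝ × ℝ => ENNReal.ofReal (q.1 ^ (p-2))) ?_ ?_
    · exact ((hgm.comp measurable_snd).sub measurable_fst).ennreal_ofReal
    · exact (measurable_fst.pow_const (p-2)).ennreal_ofReal
  have tailbound : ∫⁻ l in Ioi (0:ℝ),
        (volume.restrict (Ioi (0:ℝ))) {x | l < fL x} * ENNReal.ofReal (l^(p-1))
      ≤ ENNReal.ofReal (1/c) * (ENNReal.ofReal (1/(p*(p-1))) * Q) := by
    calc ∫⁻ l in Ioi (0:ℝ), (volume.restrict (Ioi (0:ℝ))) {x | l < fL x} * ENNReal.ofReal (l^(p-1))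
        ≤ ∫⁻ l in Ioi (0:ℝ), ENNReal.ofReal (1/c) *
            ∫⁻ z in Ioi (0:ℝ), ENNReal.ofReal (g z - l) * ENNReal.ofReal (l^(p-2)) := by
          apply lintegral_mono_ae
          filter_upwards [ae_restrict_mem measurableSet_Ioi] with l hl
          have hl0 : (0:ℝ) < l := hl
          have hll : l^(p-1) = l^(p-2)*l := by
            rw [show p-1 = p-2+1 by ring, Real.rpow_add_one (ne_of_gt hl0)]
          calc (volume.restrict (Ioi (0:ℝ))) {x | l < fL x} * ENNReal.ofReal (l^(p-1))
              ≤ ENNReal.ofReal ((A l).toReal/(c*l)) * ENNReal.ofReal (l^(p-1)) := by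
                gcongr
                exact dist l hl0
            _ = ENNReal.ofReal (1/c) * (ENNReal.ofReal ((A l).toReal) * ENNReal.ofReal (l^(p-2))) := by
                rw [← ENNReal.ofReal_mul (by positivity), ← ENNReal.ofReal_mul (by positivity),
                  ← ENNReal.ofReal_mul (by positivity)]
                congr 1
                rw [hll]
                field_simp
            _ = ENNReal.ofReal (1/c) * (A l * ENNReal.ofReal (l^(p-2))) := by rw [hofA l hl0]
            _ = ENNReal.ofReal (1/c) *
                ∫⁻ z in Ioi (0:ℝ), ENNReal.ofReal (g z - l) * ENNReal.ofReal (l^(p-2)) := by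
                rw [hA]
                rw [lintegral_mul_const' _ _ ENNReal.ofReal_ne_top]
      _ = ENNReal.ofReal (1/c) * ∫⁻ l in Ioi (0:ℝ),
            ∫⁻ z in Ioi (0:ℝ), ENNReal.ofReal (g z - l) * ENNReal.ofReal (l^(p-2)) :=
          lintegral_const_mul' _ _ ENNReal.ofReal_ne_top
      _ = ENNReal.ofReal (1/c) * ∫⁻ z in Ioi (0:ℝ),
            ∫⁻ l in Ioi (0:ℝ), ENNReal.ofReal (g z - l) * ENNReal.ofReal (l^(p-2)) := by
          rw [lintegral_lintegral_swap hswapm.aemeasurable]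
      _ = ENNReal.ofReal (1/c) * (ENNReal.ofReal (1/(p*(p-1))) * Q) := by
          congr 1
          rw [hQdef, ← lintegral_const_mul' _ _ ENNReal.ofReal_ne_top]
          apply setLIntegral_congr_fun_ae measurableSet_Ioi
          filter_upwards with z hz
          have hz0 : (0:ℝ) < z := hz
          have hgz : 0 ≤ g z := by rw [hg]; positivity
          rw [beta_int hp hgz, hgp z hz0, ← ENNReal.ofReal_mul (by positivity)]
          congr 1
          field_simp
  -- final assembly
  calc ∫⁻ x in Ioi (0:ℝ), (Tmax η f x)^p * ENNReal.ofReal (x^γ)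
      ≤ ENNReal.ofReal ((2*c)^p) * ∫⁻ x in Ioi (0:ℝ), ENNReal.ofReal (fL x ^ p) := stepL
    _ = ENNReal.ofReal ((2*c)^p) * (ENNReal.ofReal p * ∫⁻ l in Ioi (0:ℝ),
          (volume.restrict (Ioi (0:ℝ))) {x | l < fL x} * ENNReal.ofReal (l^(p-1))) := by
        rw [laycake]
    _ ≤ ENNReal.ofReal ((2*c)^p) * (ENNReal.ofReal p *
          (ENNReal.ofReal (1/c) * (ENNReal.ofReal (1/(p*(p-1))) * Q))) := by
        gcongr
    _ = K * Q := by rw [hK]; ring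

/-- boundedness of the maximal operator T_η on power weighted Lp. -/
theorem Tmax_bounded (p γ η : ℝ) (hp : 1 < p)
    (h : (1 < η ∧ (η - 1) * p ≤ γ) ∨ (η = 1 ∧ 0 < γ) ∨
      (0 < η ∧ η < 1 ∧ η - 1 ≤ γ) ∨ (η ≤ 0 ∧ -1 < γ)) :
    ∃ C : ℝ≥0, ∀ f : ℝ → ℝ, Measurable f →
      wNorm p γ (Tmax η f) ≤ C * wNormR p γ f := by
  have hp0 : (0:ℝ) < p := by linarith
  have hp1 : (0:ℝ) < p - 1 := by linarith
  set q : ℝ := p/(p-1) with hqdef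
  have hq1 : 1 < q := by rw [hqdef, lt_div_iff₀ hp1]; linarith
  have hqp : q*(p-1) = p := by rw [hqdef]; field_simp
  have hKex : ∃ K : ℝ≥0∞, K ≠ ⊤ ∧ ∀ f : ℝ → ℝ, Measurable f →
      (∫⁻ x in Ioi (0:ℝ), (Tmax η f x) ^ p * ENNReal.ofReal (x ^ γ))
        ≤ K * ∫⁻ z in Ioi (0:ℝ), ENNReal.ofReal (|f z| ^ p * z ^ γ) := by
    have regA : (η-1)*p < γ → 1 ≤ η*q → ∃ K : ℝ≥0∞, K ≠ ⊤ ∧ ∀ f : ℝ → ℝ, Measurable f →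
        (∫⁻ x in Ioi (0:ℝ), (Tmax η f x) ^ p * ENNReal.ofReal (x ^ γ))
          ≤ K * ∫⁻ z in Ioi (0:ℝ), ENNReal.ofReal (|f z| ^ p * z ^ γ) := by
      intro hγs hηq
      set ε : ℝ := min (1/2) ((γ - (η-1)*p)/(2*(p-1))) with hε
      have hd0 : (0:ℝ) < γ - (η-1)*p := by linarith
      have hε0 : 0 < ε := lt_min (by norm_num) (by positivity)
      apply branch1 p γ η q (1 - ε) hp hqdef (by linarith) (by linarith)
      have h2 : ε ≤ (γ - (η-1)*p)/(2*(p-1)) := min_le_right _ _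
      have h3 : ε * (p-1) ≤ (γ - (η-1)*p)/2 := by
        have h2' := mul_le_mul_of_nonneg_right h2 hp1.le
        have h2'' : (γ - (η-1)*p)/(2*(p-1)) * (p-1) = (γ - (η-1)*p)/2 := by
          field_simp
        linarith
      have h4 : (1 - (1 - ε)) * (p - 1) = ε * (p-1) := by ring
      rw [h4]
      linarith
    have regB : -1 < γ → η*q < 1 → ∃ K : ℝ≥0∞, K ≠ ⊤ ∧ ∀ f : ℝ → ℝ, Measurable f →
        (∫⁻ x in Ioi (0:ℝ), (Tmax η f x) ^ p * ENNReal.ofReal (x ^ γ))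
          ≤ K * ∫⁻ z in Ioi (0:ℝ), ENNReal.ofReal (|f z| ^ p * z ^ γ) := by
      intro hγ1 hηq
      apply branch1 p γ η q (η*q) hp hqdef hηq le_rfl
      have h5 : η*q*(p-1) = η*p := by rw [mul_assoc, hqp]
      nlinarith [h5]
    rcases h with ⟨hη, hγ⟩ | ⟨hη, hγ⟩ | ⟨hη1, hη2, hγ⟩ | ⟨hη, hγ⟩
    · rcases eq_or_lt_of_le hγ with heq | hlt
      · exact branch2 p γ η hp hη heq.symm
      · apply regA hlt
        nlinarith
    · apply regA (by rw [hη]; simpa using hγ)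
      rw [hη, one_mul]; linarith
    · rcases le_or_gt 1 (η*q) with hc1 | hc2
      · apply regA _ hc1
        nlinarith
      · apply regB (by linarith) hc2
    · apply regB hγ
      calc η*q ≤ 0 := mul_nonpos_of_nonpos_of_nonneg hη (by linarith)
        _ < 1 := one_pos
  obtain ⟨K, hKtop, hKb⟩ := hKex
  have hKp : K ^ (1/p) ≠ ⊤ := ENNReal.rpow_ne_top_of_nonneg (by positivity) hKtop
  refine ⟨(K ^ (1/p)).toNNReal, ?_⟩
  intro f hf
  have hcoe : ((K ^ (1/p)).toNNReal : ℝ≥0∞) = K ^ (1/p) := ENNReal.coe_toNNReal hKp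
  rw [hcoe]
  have hQ : wNormR p γ f = (∫⁻ z in Ioi (0:ℝ), ENNReal.ofReal (|f z| ^ p * z ^ γ)) ^ (1/p) := by
    rw [wNormR, wNorm]
    congr 1
    apply setLIntegral_congr_fun_ae measurableSet_Ioi
    filter_upwards with z hz
    have hz0 : (0:ℝ) < z := hz
    rw [ENNReal.ofReal_rpow_of_nonneg (abs_nonneg _) hp0.le,
      ← ENNReal.ofReal_mul (by positivity)]
  rw [hQ, wNorm]
  calc (∫⁻ x in Ioi (0:ℝ), (Tmax η f x) ^ p * ENNReal.ofReal (x ^ γ)) ^ (1/p)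
      ≤ (K * ∫⁻ z in Ioi (0:ℝ), ENNReal.ofReal (|f z| ^ p * z ^ γ)) ^ (1/p) :=
        ENNReal.rpow_le_rpow (hKb f hf) (by positivity)
    _ = K ^ (1/p) * (∫⁻ z in Ioi (0:ℝ), ENNReal.ofReal (|f z| ^ p * z ^ γ)) ^ (1/p) :=
        ENNReal.mul_rpow_of_nonneg _ _ (by positivity)
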